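/- All eigenvalues of the adjacency matrix A(X_N) are real, and the HOMO-LUMO gap λ_H − λ_L, where λ_H is the smallest nonnegative eigenvalue and λ_L is the largest nonpositive eigenvalue of A(X_N), equals 2·min over all characters χ of A of |χ(v₁) + χ(v₂) + χ(v₁)χ(v₂)|. -/

import Mathlib

open Finset in
lemma sum3 {α M : Type*} [Fintype α] [DecidableEq α] [AddCommMonoid M]
    (p q r : α) (hpq : p ≠ q) (hpr : p ≠ r) (hqr : q ≠ r) (f : α → M) :
    ∑ h, (if h = p ∨ h = q ∨ h = r then f h else 0) = f p + f q + f r := by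
  have : ∀ h : α, (h = p ∨ h = q ∨ h = r) ↔ h ∈ ({p, q, r} : Finset α) := by
    intro h; simp
  rw [Finset.sum_congr rfl (fun h _ => by rw [if_congr (this h) rfl rfl])]
  rw [Finset.sum_ite_mem, Finset.univ_inter]
  rw [Finset.sum_insert (by simp [hpq, hpr]), Finset.sum_insert (by simp [hqr]),
    Finset.sum_singleton, add_assoc]

section Chars
variable {A : Type*} [AddCommGroup A] [Fintype A]

lemma enoughRou : HasEnoughRootsOfUnity ℂ (Monoid.exponent (Multiplicative A)) := by
  haveI : NeZero (Monoid.exponent (Multiplicative A)) := ⟨Monoid.exponent_ne_zero_of_finite⟩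
  haveI : NeZero ((Monoid.exponent (Multiplicative A) : ℂ)) :=
    ⟨Nat.cast_ne_zero.mpr Monoid.exponent_ne_zero_of_finite⟩
  infer_instance

noncomputable instance instFintypeChars : Fintype (Multiplicative A →* ℂˣ) := by
  haveI := enoughRou (A := A)
  have h := CommGroup.monoidHom_mulEquiv_of_hasEnoughRootsOfUnity (Multiplicative A) ℂ
  exact @Fintype.ofFinite _ (Finite.of_equiv _ h.some.symm.toEquiv)

/-- Second orthogonality: the sum over all characters vanishes off the identity. -/
lemma sum_chars_eq_zero {x : Multiplicative A} (hx : x ≠ 1) :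
    ∑ χ : Multiplicative A →* ℂˣ, (χ x : ℂ) = 0 := by
  haveI := enoughRou (A := A)
  obtain ⟨χ₀, hχ₀⟩ := CommGroup.exists_apply_ne_one_of_hasEnoughRootsOfUnity
    (Multiplicative A) ℂ hx
  have key : (χ₀ x : ℂ) * ∑ χ : Multiplicative A →* ℂˣ, (χ x : ℂ)
      = ∑ χ : Multiplicative A →* ℂˣ, (χ x : ℂ) := by
    rw [Finset.mul_sum]
    refine Fintype.sum_bijective (fun χ => χ₀ * χ) (Group.mulLeft_bijective χ₀) _ _ ?_
    intro χ; simp [Units.val_mul]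
  have h2 : ((χ₀ x : ℂ) - 1) * ∑ χ : Multiplicative A →* ℂˣ, (χ x : ℂ) = 0 := by
    rw [sub_mul, one_mul, key, sub_self]
  rcases mul_eq_zero.mp h2 with h | h
  · rw [sub_eq_zero] at h
    exact absurd (Units.ext (by simpa using h)) hχ₀
  · exact h

/-- Fourier inversion: if all Fourier coefficients of `f` vanish, then `f = 0`. -/
lemma fourier_injective (f : A → ℂ)
    (hf : ∀ χ : Multiplicative A →* ℂˣ,
      ∑ x : A, ((χ (Multiplicative.ofAdd x) : ℂ))⁻¹ * f x = 0) :
    f = 0 := by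
  classical
  funext y
  have h1 : ∀ x : A, ∑ χ : Multiplicative A →* ℂˣ,
      (χ (Multiplicative.ofAdd y) : ℂ) * ((χ (Multiplicative.ofAdd x) : ℂ))⁻¹
      = if x = y then (Fintype.card (Multiplicative A →* ℂˣ) : ℂ) else 0 := by
    intro x
    have hterm : ∀ χ : Multiplicative A →* ℂˣ,
        (χ (Multiplicative.ofAdd y) : ℂ) * ((χ (Multiplicative.ofAdd x) : ℂ))⁻¹
        = (χ (Multiplicative.ofAdd (y - x)) : ℂ) := by
      intro χ
      have h3 : Multiplicative.ofAdd (y - x)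
          = Multiplicative.ofAdd y * (Multiplicative.ofAdd x)⁻¹ := by
        simp [sub_eq_add_neg]
      rw [h3, map_mul, map_inv, Units.val_mul, Units.val_inv_eq_inv_val]
    rw [Finset.sum_congr rfl (fun χ _ => hterm χ)]
    by_cases h : x = y
    · subst h; simp
    · rw [if_neg h]
      apply sum_chars_eq_zero
      intro hc
      apply h
      have := congrArg Multiplicative.toAdd hc
      simp only [toAdd_ofAdd] at this
      exact (sub_eq_zero.mp (by simpa using this)).symm
  have h0 : (0 : ℂ) = ∑ χ : Multiplicative A →* ℂˣ, (χ (Multiplicative.ofAdd y) : ℂ) *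
      ∑ x : A, ((χ (Multiplicative.ofAdd x) : ℂ))⁻¹ * f x := by
    simp only [hf, mul_zero, Finset.sum_const_zero]
  have h2 : (0 : ℂ) = ∑ x : A, (∑ χ : Multiplicative A →* ℂˣ,
      (χ (Multiplicative.ofAdd y) : ℂ) * ((χ (Multiplicative.ofAdd x) : ℂ))⁻¹) * f x := by
    rw [h0]
    have hstep : ∀ χ : Multiplicative A →* ℂˣ,
        (χ (Multiplicative.ofAdd y) : ℂ) * ∑ x : A, ((χ (Multiplicative.ofAdd x) : ℂ))⁻¹ * f x
        = ∑ x : A, (χ (Multiplicative.ofAdd y) : ℂ) * ((χ (Multiplicative.ofAdd x) : ℂ))⁻¹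
            * f x := fun χ => by
      rw [Finset.mul_sum]; exact Finset.sum_congr rfl fun x _ => by ring
    rw [Finset.sum_congr rfl fun χ _ => hstep χ, Finset.sum_comm]
    exact Finset.sum_congr rfl fun x _ => by rw [Finset.sum_mul]
  rw [Finset.sum_congr rfl (fun x _ => by rw [h1 x])] at h2
  simp only [ite_mul, zero_mul] at h2
  rw [Finset.sum_ite_eq' Finset.univ y
    (fun x => (Fintype.card (Multiplicative A →* ℂˣ) : ℂ) * f x)] at h2
  simp only [Finset.mem_univ, if_true] at h2
  have hcard : (Fintype.card (Multiplicative A →* ℂˣ) : ℂ) ≠ 0 := by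
    exact_mod_cast Fintype.card_ne_zero
  show f y = (0 : A → ℂ) y
  rw [Pi.zero_apply]
  exact (mul_eq_zero.mp h2.symm).resolve_left hcard

end Chars

lemma real_pow_eq_one {a : ℝ} (h0 : 0 ≤ a) {n : ℕ} (hn : n ≠ 0) (h : a ^ n = 1) : a = 1 := by
  by_contra hne
  rcases lt_or_gt_of_ne hne with hlt | hgt
  · exact absurd h (by have := pow_lt_one₀ h0 hlt hn; linarith)
  · exact absurd h (by have := one_lt_pow₀ hgt hn; linarith)

lemma char_abs_one {A : Type*} [AddCommGroup A] [Fintype A]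
    (χ : Multiplicative A →* ℂˣ) (z : Multiplicative A) : ‖(χ z : ℂ)‖ = 1 := by
  have hpow : (χ z : ℂ) ^ Fintype.card (Multiplicative A) = 1 := by
    rw [← Units.val_pow_eq_pow_val, ← map_pow, pow_card_eq_one, map_one, Units.val_one]
  have habs : ‖(χ z : ℂ)‖ ^ Fintype.card (Multiplicative A) = 1 := by
    rw [← norm_pow, hpow, norm_one]
  exact real_pow_eq_one (norm_nonneg _) Fintype.card_ne_zero habs

lemma char_inv_eq_conj {A : Type*} [AddCommGroup A] [Fintype A]
    (χ : Multiplicative A →* ℂˣ) (z : Multiplicative A) :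
    ((χ z : ℂ))⁻¹ = (starRingEnd ℂ) (χ z) := by
  apply Complex.inv_eq_conj
  exact char_abs_one χ z


/-- The action of `ℤ/2ℤ` on a commutative group `M` in which the nontrivial element
acts by inversion (negation, in additive language). -/
def negAct (M : Type*) [CommGroup M] : Multiplicative (ZMod 2) →* MulAut M where
  toFun g := if Multiplicative.toAdd g = 0 then 1 else MulEquiv.inv M
  map_one' := by simp
  map_mul' g h := by
    have hinv : MulEquiv.inv M * MulEquiv.inv M = 1 := by
      ext x; simp
    by_cases hg : Multiplicative.toAdd g = 0 <;> by_cases hh : Multiplicative.toAdd h = 0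
    · simp [hg, hh]
    · simp [hg, hh]
    · simp [hg, hh]
    · have h1 : ∀ x : ZMod 2, x ≠ 0 → x = 1 := by decide
      have h2 : (1 : ZMod 2) + 1 = 0 := by decide
      have : Multiplicative.toAdd (g * h) = 0 := by
        simp [h1 _ hg, h1 _ hh, h2]
      simp [this, hg, hh, hinv]

/-- The underlying equivalence between a semidirect product and the product type. -/
def sdpEquivProd {N G : Type*} [Group N] [Group G] (φ : G →* MulAut N) :
    (N ⋊[φ] G) ≃ N × G where
  toFun x := (x.left, x.right)
  invFun p := ⟨p.1, p.2⟩
  left_inv _ := rfl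
  right_inv _ := rfl

/-- A semidirect product of finite groups is finite. -/
instance instFintypeSdp {N G : Type*} [Group N] [Group G] [Fintype N] [Fintype G]
    {φ : G →* MulAut N} : Fintype (N ⋊[φ] G) :=
  Fintype.ofEquiv (N × G) (sdpEquivProd φ).symm

open scoped Classical in
/-- All eigenvalues of the adjacency matrix `A(X_N)` are real, and the
HOMO-LUMO gap `λ_H − λ_L`, where `λ_H` is the smallest nonnegative eigenvalue and
`λ_L` is the largest nonpositive eigenvalue of `A(X_N)`, equals
`2 · min over all characters χ of A of |χ(v₁) + χ(v₂) + χ(v₁)χ(v₂)|`. -/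
theorem stmt_12 (N : AddSubgroup (ℤ × ℤ)) [Fintype ((ℤ × ℤ) ⧸ N)]
    (h1 : (QuotientAddGroup.mk ((1, 0) : ℤ × ℤ) : (ℤ × ℤ) ⧸ N) ≠ 0)
    (h2 : (QuotientAddGroup.mk ((0, 1) : ℤ × ℤ) : (ℤ × ℤ) ⧸ N) ≠ 0)
    (h12 : (QuotientAddGroup.mk ((1, 0) : ℤ × ℤ) : (ℤ × ℤ) ⧸ N) ≠
      QuotientAddGroup.mk ((0, 1) : ℤ × ℤ)) :
    let A := (ℤ × ℤ) ⧸ N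
    let v₁ : A := QuotientAddGroup.mk (1, 0)
    let v₂ : A := QuotientAddGroup.mk (0, 1)
    let G := Multiplicative A ⋊[negAct (Multiplicative A)] Multiplicative (ZMod 2)
    let s : Multiplicative (ZMod 2) := Multiplicative.ofAdd 1
    let a : G := ⟨Multiplicative.ofAdd v₁, s⟩
    let b : G := ⟨Multiplicative.ofAdd (v₁ + v₂), s⟩
    let c : G := ⟨Multiplicative.ofAdd v₂, s⟩
    let Adj : Matrix G G ℂ :=
      fun g h => if g⁻¹ * h = a ∨ g⁻¹ * h = b ∨ g⁻¹ * h = c then 1 else 0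
    let IsEig : ℂ → Prop := fun lam => ∃ v : G → ℂ, v ≠ 0 ∧ Adj.mulVec v = lam • v
    (∀ lam : ℂ, IsEig lam → lam.im = 0) ∧
    ∃ lamH lamL m : ℝ,
      IsLeast {x : ℝ | IsEig (x : ℂ) ∧ 0 ≤ x} lamH ∧
      IsGreatest {x : ℝ | IsEig (x : ℂ) ∧ x ≤ 0} lamL ∧
      IsLeast {t : ℝ | ∃ χ : A → ℂ,
        (∀ x y, χ (x + y) = χ x * χ y) ∧ (∀ x, ‖χ x‖ = 1) ∧
        t = ‖χ v₁ + χ v₂ + χ v₁ * χ v₂‖} m ∧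
      lamH - lamL = 2 * m := by
  classical
  intro A v₁ v₂ G s a b c Adj IsEig
  letI : Fintype A := inferInstanceAs (Fintype ((ℤ × ℤ) ⧸ N))
  letI : AddCommGroup A := inferInstanceAs (AddCommGroup ((ℤ × ℤ) ⧸ N))
  have ha : a = ⟨Multiplicative.ofAdd v₁, s⟩ := rfl
  have hb : b = ⟨Multiplicative.ofAdd (v₁ + v₂), s⟩ := rfl
  have hc : c = ⟨Multiplicative.ofAdd v₂, s⟩ := rfl
  have hAdj : ∀ g h : G, Adj g h
      = if g⁻¹ * h = a ∨ g⁻¹ * h = b ∨ g⁻¹ * h = c then 1 else 0 := fun _ _ => rfl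
  -- distinctness of a, b, c
  have hab : a ≠ b := by
    intro e
    have h' : v₁ = v₁ + v₂ := congrArg (fun g : G => Multiplicative.toAdd g.left) e
    exact h2 (by rwa [left_eq_add] at h')
  have hac : a ≠ c := by
    intro e
    exact h12 (congrArg (fun g : G => Multiplicative.toAdd g.left) e)
  have hbc : b ≠ c := by
    intro e
    have h' : v₁ + v₂ = v₂ := congrArg (fun g : G => Multiplicative.toAdd g.left) e
    exact h1 (by rwa [add_eq_right] at h')
  -- row formula for the adjacency matrix
  have hrow : ∀ (v : G → ℂ) (g : G), Adj.mulVec v g = v (g * a) + v (g * b) + v (g * c) := by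
    intro v g
    have hiff : ∀ h : G, (g⁻¹ * h = a ∨ g⁻¹ * h = b ∨ g⁻¹ * h = c)
        ↔ (h = g * a ∨ h = g * b ∨ h = g * c) := by
      intro h
      rw [inv_mul_eq_iff_eq_mul, inv_mul_eq_iff_eq_mul, inv_mul_eq_iff_eq_mul]
    have step : Adj.mulVec v g = ∑ h : G, (if h = g * a ∨ h = g * b ∨ h = g * c
        then v h else 0) := by
      simp only [Matrix.mulVec, dotProduct, hAdj]
      exact Finset.sum_congr rfl fun h _ => by
        rw [ite_mul, one_mul, zero_mul, if_congr (hiff h) rfl rfl]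
    rw [step]
    exact sum3 _ _ _ (fun e => hab (mul_left_cancel e)) (fun e => hac (mul_left_cancel e))
      (fun e => hbc (mul_left_cancel e)) v
  -- negAct evaluation
  have hs : s = Multiplicative.ofAdd 1 := rfl
  have hnegs : ∀ z : Multiplicative A, negAct (Multiplicative A) s z = z⁻¹ := by
    intro z
    show (if Multiplicative.toAdd s = 0 then (1 : MulAut (Multiplicative A))
      else MulEquiv.inv (Multiplicative A)) z = z⁻¹
    rw [if_neg (by rw [hs]; decide)]
    rfl
  have hneg1 : ∀ z : Multiplicative A, negAct (Multiplicative A) 1 z = z := by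
    intro z
    show (if Multiplicative.toAdd (1 : Multiplicative (ZMod 2)) = 0
      then (1 : MulAut (Multiplicative A)) else MulEquiv.inv (Multiplicative A)) z = z
    rw [if_pos (by decide)]
    rfl
  have hss : s * s = 1 := by rw [hs]; decide
  have hZ2 : ∀ t : Multiplicative (ZMod 2), t = 1 ∨ t = s := by
    rw [hs]; decide
  -- multiplication formulas
  have hmul1 : ∀ x z : Multiplicative A, (⟨x, 1⟩ : G) * ⟨z, s⟩ = ⟨x * z, s⟩ := by
    intro x z
    ext
    · show x * negAct (Multiplicative A) 1 z = x * z
      rw [hneg1]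
    · show 1 * s = s
      rw [one_mul]
  have hmul2 : ∀ x z : Multiplicative A, (⟨x, s⟩ : G) * ⟨z, s⟩ = ⟨x * z⁻¹, 1⟩ := by
    intro x z
    ext
    · show x * negAct (Multiplicative A) s z = x * z⁻¹
      rw [hnegs]
    · show s * s = 1
      exact hss
  -- a, b, c are involutions
  have hselfinv : ∀ z : Multiplicative A, (⟨z, s⟩ : G)⁻¹ = ⟨z, s⟩ := by
    intro z
    refine inv_eq_of_mul_eq_one_right ?_
    rw [hmul2, mul_inv_cancel]
    rfl
  -- symmetry of Adj
  have hsym : ∀ g h : G, Adj g h = Adj h g := by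
    intro g h
    rw [hAdj, hAdj]
    have key : ∀ d : G, d⁻¹ = d → (g⁻¹ * h = d ↔ h⁻¹ * g = d) := by
      intro d hd
      constructor <;> intro e
      · rw [← hd, ← e, mul_inv_rev, inv_inv]
      · rw [← hd, ← e, mul_inv_rev, inv_inv]
    rw [if_congr (or_congr (key a (by rw [ha]; exact hselfinv _))
      (or_congr (key b (by rw [hb]; exact hselfinv _))
        (key c (by rw [hc]; exact hselfinv _)))) rfl rfl]
  -- entries of Adj are conj-invariant
  have hconjAdj : ∀ g h : G, (starRingEnd ℂ) (Adj g h) = Adj g h := by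
    intro g h
    rw [hAdj, apply_ite (starRingEnd ℂ), map_one, map_zero]
  -- Part 1 : all eigenvalues are real
  have part1 : ∀ lam : ℂ, IsEig lam → lam.im = 0 := by
    rintro lam ⟨v, hv, heq⟩
    set T : ℂ := ∑ g : G, (starRingEnd ℂ) (v g) * v g with hTdef
    have hTreal : T = ((∑ g : G, Complex.normSq (v g) : ℝ) : ℂ) := by
      rw [hTdef]
      push_cast
      exact Finset.sum_congr rfl fun g _ => by
        rw [mul_comm, Complex.mul_conj]
    have hT0 : T ≠ 0 := by
      rw [hTreal]
      rw [Ne, Complex.ofReal_eq_zero]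
      obtain ⟨g₀, hg₀⟩ := Function.ne_iff.mp hv
      have hpos : 0 < ∑ g : G, Complex.normSq (v g) :=
        Finset.sum_pos' (fun g _ => Complex.normSq_nonneg _)
          ⟨g₀, Finset.mem_univ _, Complex.normSq_pos.mpr hg₀⟩
      exact ne_of_gt hpos
    have hTconj : (starRingEnd ℂ) T = T := by
      rw [hTreal, Complex.conj_ofReal]
    set S : ℂ := ∑ g : G, (starRingEnd ℂ) (v g) * Adj.mulVec v g with hSdef
    have hS1 : S = lam * T := by
      rw [hSdef, hTdef, Finset.mul_sum]
      refine Finset.sum_congr rfl fun g _ => ?_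
      rw [heq]
      show (starRingEnd ℂ) (v g) * (lam * v g) = _
      ring
    have hSd : S = ∑ g : G, ∑ h : G, (starRingEnd ℂ) (v g) * Adj g h * v h := by
      rw [hSdef]
      refine Finset.sum_congr rfl fun g _ => ?_
      show (starRingEnd ℂ) (v g) * ∑ h : G, Adj g h * v h = _
      rw [Finset.mul_sum]
      exact Finset.sum_congr rfl fun h _ => by ring
    have hSconj : (starRingEnd ℂ) S = S := by
      rw [hSd, map_sum]
      have e1 : ∀ g : G, (starRingEnd ℂ) (∑ h : G, (starRingEnd ℂ) (v g) * Adj g h * v h)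
          = ∑ h : G, v g * Adj g h * (starRingEnd ℂ) (v h) := by
        intro g
        rw [map_sum]
        refine Finset.sum_congr rfl fun h _ => ?_
        rw [map_mul, map_mul, Complex.conj_conj, hconjAdj]
      rw [Finset.sum_congr rfl fun g _ => e1 g, Finset.sum_comm]
      refine Finset.sum_congr rfl fun g _ => Finset.sum_congr rfl fun h _ => ?_
      rw [hsym h g]
      ring
    have : lam * T = (starRingEnd ℂ) lam * T := by
      conv_lhs => rw [← hS1]
      rw [← hSconj, hS1, map_mul, hTconj]
    have hlam : lam = (starRingEnd ℂ) lam := mul_right_cancel₀ hT0 this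
    have := Complex.conj_eq_iff_im.mp hlam.symm
    exact this
  -- notation for characters and the character sum
  have hs1 : s ≠ 1 := by rw [hs]; decide
  set Wc : (Multiplicative A →* ℂˣ) → ℂ := fun χ =>
    (χ (Multiplicative.ofAdd v₁) : ℂ) + (χ (Multiplicative.ofAdd (v₁ + v₂)) : ℂ)
      + (χ (Multiplicative.ofAdd v₂) : ℂ) with hWc
  -- C1 : each ±|Wc χ| is an eigenvalue
  have hC1 : ∀ (χ : Multiplicative A →* ℂˣ) (ε : ℝ), ε = 1 ∨ ε = -1 →
      IsEig (((ε * ‖Wc χ‖ : ℝ) : ℂ)) := by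
    intro χ ε hε
    set lam : ℂ := ((ε * ‖Wc χ‖ : ℝ) : ℂ) with hlam
    set β : ℂ := if h : Wc χ = 0 then 0 else lam / Wc χ with hβ
    have hβW : β * Wc χ = lam := by
      by_cases h : Wc χ = 0
      · rw [hβ, dif_pos h, h, mul_zero, hlam, h]
        simp
      · rw [hβ, dif_neg h, div_mul_cancel₀ _ h]
    have hε2 : ε * ε = 1 := by rcases hε with h | h <;> rw [h] <;> norm_num
    have hlamβ : lam * β = (starRingEnd ℂ) (Wc χ) := by
      by_cases h : Wc χ = 0
      · rw [hβ, dif_pos h, mul_zero, h, map_zero]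
      · have habs2 : lam * lam = Wc χ * (starRingEnd ℂ) (Wc χ) := by
          calc lam * lam = (((ε * ε) * (‖Wc χ‖ * ‖Wc χ‖) : ℝ) : ℂ) := by
                rw [hlam]; push_cast; ring
          _ = ((‖Wc χ‖ * ‖Wc χ‖ : ℝ) : ℂ) := by rw [hε2, one_mul]
          _ = ((Complex.normSq (Wc χ) : ℝ) : ℂ) := by rw [← sq, Complex.sq_norm]
          _ = Wc χ * (starRingEnd ℂ) (Wc χ) := (Complex.mul_conj _).symm
        rw [hβ, dif_neg h]
        field_simp
        rw [sq, habs2]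
    set v : G → ℂ := fun g => (if g.right = 1 then 1 else β) * ((χ g.left : ℂ)) with hvdef
    have hval1 : ∀ z : Multiplicative A, v ⟨z, 1⟩ = (χ z : ℂ) := by
      intro z
      show (if (1 : Multiplicative (ZMod 2)) = 1 then (1 : ℂ) else β) * ((χ z : ℂ)) = _
      rw [if_pos rfl, one_mul]
    have hvals : ∀ z : Multiplicative A, v ⟨z, s⟩ = β * (χ z : ℂ) := by
      intro z
      show (if s = 1 then (1 : ℂ) else β) * ((χ z : ℂ)) = _
      rw [if_neg hs1]
    refine ⟨v, ?_, ?_⟩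
    · intro h0
      have h1' : v 1 = 0 := congrFun h0 1
      have h1'' : v 1 = 1 := by
        have : v ⟨1, 1⟩ = (χ 1 : ℂ) := hval1 1
        rw [map_one, Units.val_one] at this
        exact this
      rw [h1''] at h1'
      exact one_ne_zero h1'
    · funext g
      show Adj.mulVec v g = lam * v g
      rw [hrow]
      obtain ⟨x, t⟩ := g
      rcases hZ2 t with ht | ht <;> subst ht
      · rw [ha, hb, hc, hmul1, hmul1, hmul1, hvals, hvals, hvals, hval1]
        simp only [map_mul, Units.val_mul]
        have hW' : β * ((χ (Multiplicative.ofAdd v₁) : ℂ)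
            + (χ (Multiplicative.ofAdd (v₁ + v₂)) : ℂ)
            + (χ (Multiplicative.ofAdd v₂) : ℂ)) = lam := hβW
        linear_combination (χ x : ℂ) * hW'
      · rw [ha, hb, hc, hmul2, hmul2, hmul2, hval1, hval1, hval1, hvals]
        simp only [map_mul, map_inv, Units.val_mul, Units.val_inv_eq_inv_val]
        rw [char_inv_eq_conj, char_inv_eq_conj, char_inv_eq_conj]
        have hW' : lam * β = (starRingEnd ℂ) (χ (Multiplicative.ofAdd v₁) : ℂ)
            + (starRingEnd ℂ) (χ (Multiplicative.ofAdd (v₁ + v₂)) : ℂ)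
            + (starRingEnd ℂ) (χ (Multiplicative.ofAdd v₂) : ℂ) := by
          rw [hlamβ, hWc]
          simp only [map_add]
        linear_combination (-(χ x : ℂ)) * hW'
  -- C2 : every eigenvalue squares to |Wc χ|² for some character χ
  have hC2 : ∀ lam : ℂ, IsEig lam →
      ∃ χ : Multiplicative A →* ℂˣ, lam * lam = Wc χ * (starRingEnd ℂ) (Wc χ) := by
    rintro lam ⟨v, hv0, heq⟩
    have heq' : ∀ g : G, v (g * a) + v (g * b) + v (g * c) = lam * v g := by
      intro g
      rw [← hrow, heq]
      rfl
    set F : (Multiplicative A →* ℂˣ) → Multiplicative (ZMod 2) → ℂ := fun χ t =>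
      ∑ z : A, ((χ (Multiplicative.ofAdd z) : ℂ))⁻¹ * v ⟨Multiplicative.ofAdd z, t⟩ with hF
    have hshift : ∀ (χ : Multiplicative A →* ℂˣ) (u : A) (t : Multiplicative (ZMod 2)),
        ∑ z : A, ((χ (Multiplicative.ofAdd z) : ℂ))⁻¹ * v ⟨Multiplicative.ofAdd (z + u), t⟩
        = (χ (Multiplicative.ofAdd u) : ℂ) * F χ t := by
      intro χ u t
      show _ = (χ (Multiplicative.ofAdd u) : ℂ)
        * ∑ z : A, ((χ (Multiplicative.ofAdd z) : ℂ))⁻¹ * v ⟨Multiplicative.ofAdd z, t⟩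
      rw [Finset.mul_sum]
      refine Fintype.sum_bijective (fun z : A => z + u) (Equiv.addRight u).bijective _ _ ?_
      intro z
      have hm : (χ (Multiplicative.ofAdd (z + u)) : ℂ)
          = (χ (Multiplicative.ofAdd z) : ℂ) * (χ (Multiplicative.ofAdd u) : ℂ) := by
        rw [ofAdd_add, map_mul, Units.val_mul]
      have hz0 : (χ (Multiplicative.ofAdd z) : ℂ) ≠ 0 := Units.ne_zero _
      have hu0 : (χ (Multiplicative.ofAdd u) : ℂ) ≠ 0 := Units.ne_zero _
      rw [hm, mul_inv]
      field_simp
    have hnegval : ∀ (χ : Multiplicative A →* ℂˣ) (u : A),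
        (χ (Multiplicative.ofAdd (-u)) : ℂ)
        = (starRingEnd ℂ) ((χ (Multiplicative.ofAdd u) : ℂ)) := by
      intro χ u
      rw [ofAdd_neg, map_inv, Units.val_inv_eq_inv_val, char_inv_eq_conj]
    have hR1 : ∀ χ : Multiplicative A →* ℂˣ, Wc χ * F χ s = lam * F χ 1 := by
      intro χ
      have hper : ∀ z : A, v ⟨Multiplicative.ofAdd (z + v₁), s⟩
          + v ⟨Multiplicative.ofAdd (z + (v₁ + v₂)), s⟩
          + v ⟨Multiplicative.ofAdd (z + v₂), s⟩
          = lam * v ⟨Multiplicative.ofAdd z, 1⟩ := by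
        intro z
        have h' := heq' ⟨Multiplicative.ofAdd z, 1⟩
        rw [ha, hb, hc, hmul1, hmul1, hmul1] at h'
        rw [ofAdd_add, ofAdd_add, ofAdd_add]
        exact h'
      have hsum : ∑ z : A, ((χ (Multiplicative.ofAdd z) : ℂ))⁻¹
            * (v ⟨Multiplicative.ofAdd (z + v₁), s⟩
              + v ⟨Multiplicative.ofAdd (z + (v₁ + v₂)), s⟩
              + v ⟨Multiplicative.ofAdd (z + v₂), s⟩)
          = ∑ z : A, ((χ (Multiplicative.ofAdd z) : ℂ))⁻¹
            * (lam * v ⟨Multiplicative.ofAdd z, 1⟩) :=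
        Finset.sum_congr rfl fun z _ => by rw [hper z]
      have hL : ∑ z : A, ((χ (Multiplicative.ofAdd z) : ℂ))⁻¹
            * (v ⟨Multiplicative.ofAdd (z + v₁), s⟩
              + v ⟨Multiplicative.ofAdd (z + (v₁ + v₂)), s⟩
              + v ⟨Multiplicative.ofAdd (z + v₂), s⟩)
          = Wc χ * F χ s := by
        have e1 : ∀ z : A, ((χ (Multiplicative.ofAdd z) : ℂ))⁻¹
            * (v ⟨Multiplicative.ofAdd (z + v₁), s⟩
              + v ⟨Multiplicative.ofAdd (z + (v₁ + v₂)), s⟩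
              + v ⟨Multiplicative.ofAdd (z + v₂), s⟩)
            = ((χ (Multiplicative.ofAdd z) : ℂ))⁻¹ * v ⟨Multiplicative.ofAdd (z + v₁), s⟩
            + ((χ (Multiplicative.ofAdd z) : ℂ))⁻¹ * v ⟨Multiplicative.ofAdd (z + (v₁ + v₂)), s⟩
            + ((χ (Multiplicative.ofAdd z) : ℂ))⁻¹ * v ⟨Multiplicative.ofAdd (z + v₂), s⟩ :=
          fun z => by ring
        rw [Finset.sum_congr rfl fun z _ => e1 z, Finset.sum_add_distrib,
          Finset.sum_add_distrib, hshift χ v₁ s, hshift χ (v₁ + v₂) s, hshift χ v₂ s, hWc]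
        ring
      have hRr : ∑ z : A, ((χ (Multiplicative.ofAdd z) : ℂ))⁻¹
            * (lam * v ⟨Multiplicative.ofAdd z, 1⟩) = lam * F χ 1 := by
        have e2 : ∀ z : A, ((χ (Multiplicative.ofAdd z) : ℂ))⁻¹
            * (lam * v ⟨Multiplicative.ofAdd z, 1⟩)
            = lam * (((χ (Multiplicative.ofAdd z) : ℂ))⁻¹ * v ⟨Multiplicative.ofAdd z, 1⟩) :=
          fun z => by ring
        rw [Finset.sum_congr rfl fun z _ => e2 z, ← Finset.mul_sum]
      rw [← hL, hsum]
      exact hRr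
    have hR2 : ∀ χ : Multiplicative A →* ℂˣ,
        (starRingEnd ℂ) (Wc χ) * F χ 1 = lam * F χ s := by
      intro χ
      have hper : ∀ z : A, v ⟨Multiplicative.ofAdd (z + -v₁), 1⟩
          + v ⟨Multiplicative.ofAdd (z + -(v₁ + v₂)), 1⟩
          + v ⟨Multiplicative.ofAdd (z + -v₂), 1⟩
          = lam * v ⟨Multiplicative.ofAdd z, s⟩ := by
        intro z
        have h' := heq' ⟨Multiplicative.ofAdd z, s⟩
        rw [ha, hb, hc, hmul2, hmul2, hmul2] at h'
        rw [ofAdd_add, ofAdd_add, ofAdd_add, ofAdd_neg, ofAdd_neg, ofAdd_neg]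
        exact h'
      have hsum : ∑ z : A, ((χ (Multiplicative.ofAdd z) : ℂ))⁻¹
            * (v ⟨Multiplicative.ofAdd (z + -v₁), 1⟩
              + v ⟨Multiplicative.ofAdd (z + -(v₁ + v₂)), 1⟩
              + v ⟨Multiplicative.ofAdd (z + -v₂), 1⟩)
          = ∑ z : A, ((χ (Multiplicative.ofAdd z) : ℂ))⁻¹
            * (lam * v ⟨Multiplicative.ofAdd z, s⟩) :=
        Finset.sum_congr rfl fun z _ => by rw [hper z]
      have hL : ∑ z : A, ((χ (Multiplicative.ofAdd z) : ℂ))⁻¹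
            * (v ⟨Multiplicative.ofAdd (z + -v₁), 1⟩
              + v ⟨Multiplicative.ofAdd (z + -(v₁ + v₂)), 1⟩
              + v ⟨Multiplicative.ofAdd (z + -v₂), 1⟩)
          = (starRingEnd ℂ) (Wc χ) * F χ 1 := by
        have e1 : ∀ z : A, ((χ (Multiplicative.ofAdd z) : ℂ))⁻¹
            * (v ⟨Multiplicative.ofAdd (z + -v₁), 1⟩
              + v ⟨Multiplicative.ofAdd (z + -(v₁ + v₂)), 1⟩
              + v ⟨Multiplicative.ofAdd (z + -v₂), 1⟩)
            = ((χ (Multiplicative.ofAdd z) : ℂ))⁻¹ * v ⟨Multiplicative.ofAdd (z + -v₁), 1⟩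
            + ((χ (Multiplicative.ofAdd z) : ℂ))⁻¹
              * v ⟨Multiplicative.ofAdd (z + -(v₁ + v₂)), 1⟩
            + ((χ (Multiplicative.ofAdd z) : ℂ))⁻¹ * v ⟨Multiplicative.ofAdd (z + -v₂), 1⟩ :=
          fun z => by ring
        rw [Finset.sum_congr rfl fun z _ => e1 z, Finset.sum_add_distrib,
          Finset.sum_add_distrib, hshift χ (-v₁) 1, hshift χ (-(v₁ + v₂)) 1, hshift χ (-v₂) 1,
          hnegval χ v₁, hnegval χ (v₁ + v₂), hnegval χ v₂, hWc]
        simp only [map_add]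
        ring
      have hRr : ∑ z : A, ((χ (Multiplicative.ofAdd z) : ℂ))⁻¹
            * (lam * v ⟨Multiplicative.ofAdd z, s⟩) = lam * F χ s := by
        have e2 : ∀ z : A, ((χ (Multiplicative.ofAdd z) : ℂ))⁻¹
            * (lam * v ⟨Multiplicative.ofAdd z, s⟩)
            = lam * (((χ (Multiplicative.ofAdd z) : ℂ))⁻¹ * v ⟨Multiplicative.ofAdd z, s⟩) :=
          fun z => by ring
        rw [Finset.sum_congr rfl fun z _ => e2 z, ← Finset.mul_sum]
      rw [← hL, hsum]
      exact hRr
    have hex : ∃ (χ : Multiplicative A →* ℂˣ) (t : Multiplicative (ZMod 2)), F χ t ≠ 0 := by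
      by_contra hno
      push_neg at hno
      apply hv0
      have hz1 : (fun z : A => v ⟨Multiplicative.ofAdd z, 1⟩) = 0 :=
        fourier_injective _ (fun χ => hno χ 1)
      have hzs : (fun z : A => v ⟨Multiplicative.ofAdd z, s⟩) = 0 :=
        fourier_injective _ (fun χ => hno χ s)
      funext g
      obtain ⟨x, t⟩ := g
      rcases hZ2 t with ht | ht <;> subst ht
      · have h' := congrFun hz1 (Multiplicative.toAdd x)
        exact h'
      · have h' := congrFun hzs (Multiplicative.toAdd x)
        exact h'
    obtain ⟨χ, t, hFt⟩ := hex
    refine ⟨χ, mul_right_cancel₀ hFt ?_⟩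
    rcases hZ2 t with ht | ht <;> subst ht
    · calc (lam * lam) * F χ 1 = lam * (lam * F χ 1) := by ring
      _ = lam * (Wc χ * F χ s) := by rw [← hR1 χ]
      _ = Wc χ * (lam * F χ s) := by ring
      _ = Wc χ * ((starRingEnd ℂ) (Wc χ) * F χ 1) := by rw [← hR2 χ]
      _ = (Wc χ * (starRingEnd ℂ) (Wc χ)) * F χ 1 := by ring
    · calc (lam * lam) * F χ s = lam * (lam * F χ s) := by ring
      _ = lam * ((starRingEnd ℂ) (Wc χ) * F χ 1) := by rw [← hR2 χ]
      _ = (starRingEnd ℂ) (Wc χ) * (lam * F χ 1) := by ring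
      _ = (starRingEnd ℂ) (Wc χ) * (Wc χ * F χ s) := by rw [← hR1 χ]
      _ = (Wc χ * (starRingEnd ℂ) (Wc χ)) * F χ s := by ring
  -- assembly
  haveI : Nonempty (Multiplicative A →* ℂˣ) := ⟨1⟩
  obtain ⟨χm, hχm⟩ := Finite.exists_min (fun χ : Multiplicative A →* ℂˣ => ‖Wc χ‖)
  have habs_eig : ∀ x : ℝ, IsEig ((x : ℝ) : ℂ) →
      ∃ χ : Multiplicative A →* ℂˣ, x * x = ‖Wc χ‖ * ‖Wc χ‖ := by
    intro x hx
    obtain ⟨χ, hW⟩ := hC2 _ hx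
    refine ⟨χ, ?_⟩
    have h' : ((x * x : ℝ) : ℂ) = ((‖Wc χ‖ * ‖Wc χ‖ : ℝ) : ℂ) := by
      calc ((x * x : ℝ) : ℂ) = ((x : ℝ) : ℂ) * ((x : ℝ) : ℂ) := by push_cast; ring
      _ = Wc χ * (starRingEnd ℂ) (Wc χ) := hW
      _ = ((Complex.normSq (Wc χ) : ℝ) : ℂ) := Complex.mul_conj _
      _ = ((‖Wc χ‖ * ‖Wc χ‖ : ℝ) : ℂ) := by
          rw [← sq, Complex.sq_norm]
    exact_mod_cast h'
  refine ⟨part1, ‖Wc χm‖, -‖Wc χm‖, ‖Wc χm‖,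
    ⟨⟨?_, norm_nonneg _⟩, ?_⟩, ⟨⟨?_, by linarith [norm_nonneg (Wc χm)]⟩, ?_⟩,
    ⟨?_, ?_⟩, by ring⟩
  · have h' := hC1 χm 1 (Or.inl rfl)
    rw [one_mul] at h'
    exact h'
  · rintro x ⟨hxe, hx0⟩
    obtain ⟨χ, hxx⟩ := habs_eig x hxe
    have hw0 : 0 ≤ ‖Wc χ‖ := norm_nonneg _
    have hxw : x = ‖Wc χ‖ := by
      have hfac : (x - ‖Wc χ‖) * (x + ‖Wc χ‖) = 0 := by
        linear_combination hxx
      rcases mul_eq_zero.mp hfac with h' | h' <;> linarith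
    rw [hxw]
    exact hχm χ
  · have h' := hC1 χm (-1) (Or.inr rfl)
    rw [neg_one_mul] at h'
    exact h'
  · rintro x ⟨hxe, hx0⟩
    obtain ⟨χ, hxx⟩ := habs_eig x hxe
    have hw0 : 0 ≤ ‖Wc χ‖ := norm_nonneg _
    have hxw : x = -‖Wc χ‖ := by
      have hfac : (x - ‖Wc χ‖) * (x + ‖Wc χ‖) = 0 := by
        linear_combination hxx
      rcases mul_eq_zero.mp hfac with h' | h' <;> linarith
    have hle := hχm χ
    rw [hxw]
    linarith
  · refine ⟨fun z : A => ((χm (Multiplicative.ofAdd z) : ℂ)), ?_, ?_, ?_⟩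
    · intro x y
      show (χm (Multiplicative.ofAdd (x + y)) : ℂ)
        = (χm (Multiplicative.ofAdd x) : ℂ) * (χm (Multiplicative.ofAdd y) : ℂ)
      rw [ofAdd_add, map_mul, Units.val_mul]
    · intro x
      exact char_abs_one χm _
    · have hgoal : Wc χm = (χm (Multiplicative.ofAdd v₁) : ℂ) + (χm (Multiplicative.ofAdd v₂) : ℂ)
          + (χm (Multiplicative.ofAdd v₁) : ℂ) * (χm (Multiplicative.ofAdd v₂) : ℂ) := by
        show (χm (Multiplicative.ofAdd v₁) : ℂ) + (χm (Multiplicative.ofAdd (v₁ + v₂)) : ℂ)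
          + (χm (Multiplicative.ofAdd v₂) : ℂ) = _
        rw [ofAdd_add, map_mul, Units.val_mul]
        ring
      exact congrArg norm hgoal
  · rintro t ⟨χ, hhom, habs, ht⟩
    have hne : ∀ z : A, χ z ≠ 0 := by
      intro z h0
      have h' := habs z
      rw [h0] at h'
      simp at h'
    set χ' : Multiplicative A →* ℂˣ := MonoidHom.mk'
      (fun z => Units.mk0 (χ (Multiplicative.toAdd z)) (hne _))
      (by
        intro x y
        ext
        show χ (Multiplicative.toAdd (x * y))
          = χ (Multiplicative.toAdd x) * χ (Multiplicative.toAdd y)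
        rw [toAdd_mul, hhom]) with hχ'
    have hval : ∀ u : A, (χ' (Multiplicative.ofAdd u) : ℂ) = χ u := fun u => rfl
    have hle := hχm χ'
    have hWeq : Wc χ' = χ v₁ + χ v₂ + χ v₁ * χ v₂ := by
      show (χ' (Multiplicative.ofAdd v₁) : ℂ) + (χ' (Multiplicative.ofAdd (v₁ + v₂)) : ℂ)
        + (χ' (Multiplicative.ofAdd v₂) : ℂ) = _
      rw [hval, hval, hval, hhom]
      ring
    rw [ht, ← hWeq]
    exact hle
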